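/- Let R be a principal ideal domain and let n ∈ R be nonzero. Let a ∈ R be such that for a greatest common divisor d of a and n (i.e., dR = aR + nR) one has: d is not a unit and d ∉ nR. Then at least one of the following holds: (1) there exist m ∈ R and an integer k > 1 such that n is associated to m^k (n = m^k up to multiplication by a unit) and m divides a (equivalently, m is a greatest common divisor of a and m); or (2) there exist non-unit elements p, q ∈ R that are coprime (r·p + s·q = 1 for some r, s ∈ R) with n = p·q. -/

import Mathlib

/-- Splitting a modulus in a PID: if `d` is a gcd of `a` and `n` (`dR = aR + nR`) with `d`
neither a unit nor in `nR`, then either `n` is (up to a unit) a proper power `m^k` with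
`m ∣ a`, or `n = p·q` with `p, q` coprime non-units. -/
theorem split_modulus_of_gcd_not_unit {R : Type*} [CommRing R] [IsDomain R]
    [IsPrincipalIdealRing R] (n : R) (hn : n ≠ 0) (a d : R)
    (hd : Ideal.span ({d} : Set R) = Ideal.span ({a} : Set R) + Ideal.span ({n} : Set R))
    (hd1 : ¬ IsUnit d) (hd2 : d ∉ Ideal.span ({n} : Set R)) :
    (∃ m : R, ∃ k : ℕ, 1 < k ∧ Associated n (m ^ k) ∧ m ∣ a) ∨
    (∃ p q : R, ¬ IsUnit p ∧ ¬ IsUnit q ∧ IsCoprime p q ∧ n = p * q) := by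
  rw [Ideal.add_eq_sup] at hd
  have hda : d ∣ a := by
    rw [← Ideal.mem_span_singleton, hd]
    exact Ideal.mem_sup_left (Ideal.mem_span_singleton_self a)
  have hdn : d ∣ n := by
    rw [← Ideal.mem_span_singleton, hd]
    exact Ideal.mem_sup_right (Ideal.mem_span_singleton_self n)
  have hnd : ¬ n ∣ d := fun h => hd2 (Ideal.mem_span_singleton.mpr h)
  have hd0 : d ≠ 0 := fun h => hn (by simpa [h, zero_dvd_iff] using hdn)
  obtain ⟨p, hp_irr, hpd⟩ := WfDvdMonoid.exists_irreducible_factor hd1 hd0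
  have hp : Prime p := hp_irr.prime
  have hfin : FiniteMultiplicity p n := FiniteMultiplicity.of_prime_left hp hn
  obtain ⟨c, hc, hpc⟩ := hfin.exists_eq_pow_mul_and_not_dvd
  set k := multiplicity p n with hk
  have hk1 : 1 ≤ k := by
    have hpn : p ∣ n := hpd.trans hdn
    exact Nat.one_le_iff_ne_zero.mpr (multiplicity_ne_zero.mpr hpn)
  by_cases hcu : IsUnit c
  · left
    refine ⟨p, k, ?_, ?_, hpd.trans hda⟩
    · by_contra h
      have hk_eq : k = 1 := le_antisymm (not_lt.mp h) hk1
      have hassoc : Associated n p := by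
        rw [hc, hk_eq, pow_one]
        exact associated_mul_unit_left p c hcu
      exact hnd (hassoc.dvd.trans hpd)
    · rw [hc]
      exact associated_mul_unit_left (p ^ k) c hcu
  · right
    refine ⟨p ^ k, c, ?_, hcu, ?_, hc⟩
    · intro h
      exact hp.not_unit (isUnit_of_dvd_unit (dvd_pow_self p (Nat.one_le_iff_ne_zero.mp hk1)) h)
    · exact (hp.coprime_iff_not_dvd.mpr hpc).pow_left
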